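/- For μ ∈ [0,1/2] and p ∈ [0,1] and k ≥ 2, the partial derivative of D(k,μ,p) := (1-(1-μp)^k)/(2k) + p/2 - (1-μ)p(1-μp)^{k-1}/2 - μp with respect to p equals ( μp(k-1)(1-μ)(1-μp)^{k-2} + (1-2μ)(1-(1-μp)^{k-1}) )/2, and this expression is nonnegative. -/

import Mathlib

/-- The partial derivative of `D(k,μ,p)` with respect to `p` equals
`(μp(k-1)(1-μ)(1-μp)^(k-2) + (1-2μ)(1-(1-μp)^(k-1)))/2`, which is
nonnegative for `μ ≤ 1/2`. -/
theorem D_deriv (μ p : ℝ) (hμ0 : 0 ≤ μ) (hμ1 : μ ≤ 1 / 2)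
    (hp0 : 0 ≤ p) (hp1 : p ≤ 1) (k : ℕ) (hk : 2 ≤ k) :
    HasDerivAt (fun q : ℝ => (1 - (1 - μ * q) ^ k) / (2 * k) + q / 2
        - (1 - μ) * q * (1 - μ * q) ^ (k - 1) / 2 - μ * q)
      ((μ * p * ((k : ℝ) - 1) * (1 - μ) * (1 - μ * p) ^ (k - 2)
        + (1 - 2 * μ) * (1 - (1 - μ * p) ^ (k - 1))) / 2) p ∧
    0 ≤ (μ * p * ((k : ℝ) - 1) * (1 - μ) * (1 - μ * p) ^ (k - 2)
        + (1 - 2 * μ) * (1 - (1 - μ * p) ^ (k - 1))) / 2 := by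
  obtain ⟨m, rfl⟩ := Nat.exists_eq_add_of_le hk
  constructor
  · have h0 : HasDerivAt (fun q : ℝ => 1 - μ * q) (-μ) p := by
      exact (((hasDerivAt_id p).const_mul μ).const_sub 1).congr_deriv (by simp)
    have hpow : ∀ n : ℕ, HasDerivAt (fun q : ℝ => (1 - μ * q) ^ n)
        ((n : ℝ) * (1 - μ * p) ^ (n - 1) * (-μ)) p := fun n => h0.pow n
    have H := (((((hasDerivAt_const p (1 : ℝ)).sub (hpow (2 + m))).div_const
          (2 * ((2 + m : ℕ) : ℝ))).add ((hasDerivAt_id p).div_const 2)).sub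
        (((((hasDerivAt_id p).const_mul (1 - μ)).mul (hpow (2 + m - 1))).div_const 2))).sub
        ((hasDerivAt_id p).const_mul μ)
    refine H.congr_deriv ?_
    have hm : ((2 + m : ℕ) : ℝ) ≠ 0 := by positivity
    simp only [id_eq]
    push_cast
    have h1 : 2 + m - 1 = 1 + m := by omega
    have h2 : 2 + m - 2 = m := by omega
    have h3 : 1 + m - 1 = m := by omega
    rw [h1, h2, h3]
    push_cast
    field_simp
    ring
  · have hμp : 0 ≤ μ * p := mul_nonneg hμ0 hp0
    have hμp1 : μ * p ≤ 1 := by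
      calc μ * p ≤ 1 * 1 := by
            apply mul_le_mul (by linarith) hp1 hp0 (by norm_num)
        _ = 1 := by norm_num
    have hb0 : 0 ≤ 1 - μ * p := by linarith
    have hb1 : (1 - μ * p) ^ (2 + m - 1) ≤ 1 := pow_le_one₀ hb0 (by linarith)
    have hk1 : (0 : ℝ) ≤ ((2 + m : ℕ) : ℝ) - 1 := by push_cast; linarith [Nat.cast_nonneg (α := ℝ) m]
    have t1 : 0 ≤ μ * p * (((2 + m : ℕ) : ℝ) - 1) * (1 - μ) * (1 - μ * p) ^ (2 + m - 2) := by
      apply mul_nonneg (mul_nonneg (mul_nonneg hμp hk1) (by linarith)) (pow_nonneg hb0 _)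
    have t2 : 0 ≤ (1 - 2 * μ) * (1 - (1 - μ * p) ^ (2 + m - 1)) :=
      mul_nonneg (by linarith) (by linarith)
    linarith
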